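/- Fix a real number r with 0 < r < 1, and let a : ℕ → ℝ satisfy a(2) = 1 and the recurrence a(N+1) = (1 - (1-r)/N)·a(N) + 1 for all integers N ≥ 2. Then a(N) = N/(2-r) - Γ(N-1+r) / ((2-r)·Γ(r)·Γ(N)) for all integers N ≥ 2, where Γ denotes the Gamma function. (This is the average number of degree-one vertices in the redirection-deformed random recursive hypergraph, which is no longer strictly linear in N: the sub-leading term vanishes as N^{-(1-r)}.) -/

import Mathlib

/-- The average number of degree-one vertices in the redirection-deformed RRH:
`a(N) = N/(2-r) - Γ(N-1+r)/((2-r)Γ(r)Γ(N))`. -/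
theorem rrh_redirection_degree_one_mean (r : ℝ) (hr0 : 0 < r) (hr1 : r < 1)
    (a : ℕ → ℝ) (h2 : a 2 = 1)
    (hrec : ∀ N : ℕ, 2 ≤ N → a (N + 1) = (1 - (1 - r) / (N : ℝ)) * a N + 1) :
    ∀ N : ℕ, 2 ≤ N →
      a N = (N : ℝ) / (2 - r)
        - Real.Gamma ((N : ℝ) - 1 + r) / ((2 - r) * Real.Gamma r * Real.Gamma (N : ℝ)) := by
  have h2r : (2 : ℝ) - r ≠ 0 := by linarith
  have hGr : Real.Gamma r ≠ 0 := (Real.Gamma_pos_of_pos hr0).ne'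
  intro N hN
  induction N, hN using Nat.le_induction with
  | base =>
    have h1r : Real.Gamma (1 + r) = r * Real.Gamma r := by
      rw [add_comm, Real.Gamma_add_one hr0.ne']
    norm_num [h2, h1r, Real.Gamma_two]
    field_simp
  | succ N hN ih =>
    have hNpos : (0 : ℝ) < N := by exact_mod_cast Nat.lt_of_lt_of_le (by norm_num) hN
    have hGN : Real.Gamma (N : ℝ) ≠ 0 := (Real.Gamma_pos_of_pos hNpos).ne'
    have hx : (0 : ℝ) < (N : ℝ) - 1 + r := by
      have : (1 : ℝ) ≤ N := by exact_mod_cast Nat.one_le_of_lt hN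
      linarith
    have hG1 : Real.Gamma ((N : ℝ) - 1 + r + 1) = ((N : ℝ) - 1 + r) * Real.Gamma ((N : ℝ) - 1 + r) :=
      Real.Gamma_add_one hx.ne'
    have hG2 : Real.Gamma ((N : ℝ) + 1) = (N : ℝ) * Real.Gamma (N : ℝ) :=
      Real.Gamma_add_one hNpos.ne'
    have key : ((N : ℝ) + 1) - 1 + r = (N : ℝ) - 1 + r + 1 := by ring
    rw [hrec N hN, ih, Nat.cast_add, Nat.cast_one, key, hG1, hG2]
    field_simp
    ring
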